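/- Suppose f₁, f₂, f₃ and g₁, g₂, g₃ are positive functions, bounded away from zero and infinity, with f₁, g₁, f₂, g₂ differentiable on [0,1], f₃, g₃ twice differentiable on [0,1), normalized by ∫₀¹ f₁ = ∫₀¹ g₁ = ∫₀¹ f₂ = ∫₀¹ g₂ = 1, and assume f₁(x)f₂(y)f₃(m_J(x+y)) = g₁(x)g₂(y)g₃(m_J(x+y)) for all (x,y) ∈ I, where I ⊂ [0,1]² satisfies: (A1) its projections onto both axes equal [0,1]; (A2) for every z ∈ [0,1) there is (x,y) in the interior of I with m_J(x+y) = z, and for every x,y ∈ (0,1) there exist x', y' with (x,y') and (x',y) in the interior of I; (A5) there exist 0 = x₀ < x₁ < ⋯ < x_k = 1 and 1 = y₀ > y₁ > ⋯ > y_k = 0 with (x, y_j) ∈ I for x_j ≤ x ≤ x_{j+1}. Then f₁ = g₁, f₂ = g₂ and f₃ = g₃. -/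

import Mathlib

/-- The periodic wrapping function `m_J(t) = J·(t mod 1/J)`. -/
noncomputable def mJ (J t : ℝ) : ℝ := Int.fract (J * t)

open Set Filter Topology

/-- A function continuous on `[a,b]` with zero derivative on `(a,b)` is constant. -/
lemma aux_const_on (f : ℝ → ℝ) (a b : ℝ) (hab : a < b)
    (hc : ContinuousOn f (Set.Icc a b))
    (hd : ∀ z ∈ Set.Ioo a b, HasDerivAt f 0 z) :
    ∀ z ∈ Set.Icc a b, f z = f a := by
  intro z hz
  rcases eq_or_lt_of_le hz.1 with h | h
  · rw [← h]
  have key : ∀ w ∈ Set.Ioc a z, f z = f w := by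
    intro w hw
    have hcont : ContinuousOn f (Set.Icc w z) :=
      hc.mono (Set.Icc_subset_Icc hw.1.le hz.2)
    have hderiv : ∀ x ∈ Set.Ico w z, HasDerivWithinAt f 0 (Set.Ici x) x := by
      intro x hx
      exact (hd x ⟨lt_of_lt_of_le hw.1 hx.1, lt_of_lt_of_le hx.2 hz.2⟩).hasDerivWithinAt
    exact (constant_of_has_deriv_right_zero hcont hderiv z ⟨hw.2, le_refl z⟩)
  have hne : (𝓝[Set.Ioc a z] a).NeBot := by
    rw [← mem_closure_iff_nhdsWithin_neBot, closure_Ioc h.ne]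
    exact ⟨le_refl a, h.le⟩
  have h1 : Filter.Tendsto f (𝓝[Set.Ioc a z] a) (𝓝 (f a)) := by
    have hca : ContinuousWithinAt f (Set.Icc a b) a := hc a ⟨le_refl a, hab.le⟩
    exact hca.tendsto.mono_left
      (nhdsWithin_mono a (Set.Ioc_subset_Icc_self.trans (Set.Icc_subset_Icc (le_refl a) hz.2)))
  have h2 : Filter.Tendsto f (𝓝[Set.Ioc a z] a) (𝓝 (f z)) := by
    refine Filter.Tendsto.congr' ?_ tendsto_const_nhds
    exact Filter.eventuallyEq_of_mem self_mem_nhdsWithin (fun w hw => key w hw)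
  exact tendsto_nhds_unique h2 h1

/-- Core local computation: at an interior point of `I` where the wrap does not occur,
the derivative of `h₁` is determined by the derivative of `h₃`. -/
lemma aux_core (J : ℝ) (hJ : 0 < J) (I : Set (ℝ × ℝ))
    (h₁ h₂ h₃ : ℝ → ℝ)
    (hd₃ : DifferentiableOn ℝ h₃ (Set.Ico 0 1))
    (hsum : ∀ p ∈ I, h₁ p.1 + h₂ p.2 + h₃ (Int.fract (J * (p.1 + p.2))) = 0)
    (x₀ y₀ : ℝ) (hp : (x₀, y₀) ∈ interior I)
    (hd₁ : DifferentiableAt ℝ h₁ x₀)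
    (hz : Int.fract (J * (x₀ + y₀)) ≠ 0) :
    deriv h₁ x₀ = -(J * deriv h₃ (Int.fract (J * (x₀ + y₀)))) := by
  set t₀ := x₀ + y₀ with ht₀
  set n : ℤ := ⌊J * t₀⌋ with hn
  set z₀ := Int.fract (J * t₀) with hz₀
  have hz₀pos : 0 < z₀ := lt_of_le_of_ne (Int.fract_nonneg _) (Ne.symm hz)
  have hz₀lt : z₀ < 1 := Int.fract_lt_one _
  have hfl : (n : ℝ) + z₀ = J * t₀ := Int.floor_add_fract _
  obtain ⟨ε, hεpos, hball⟩ : ∃ ε > 0, Metric.ball (x₀, y₀) ε ⊆ I := by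
    rcases Metric.mem_nhds_iff.mp (mem_interior_iff_mem_nhds.mp hp) with ⟨ε, hε, hb⟩
    exact ⟨ε, hε, hb⟩
  set δ := min ε (min z₀ (1 - z₀) / (2 * J)) with hδ
  have hδpos : 0 < δ := by
    refine lt_min hεpos (div_pos (lt_min hz₀pos (by linarith)) (by positivity))
  have hkey : ∀ x, |x - x₀| < δ →
      (x, y₀) ∈ I ∧ Int.fract (J * (x + y₀)) = J * (x + y₀) - n := by
    intro x hx
    have hmem : (x, y₀) ∈ I := by
      apply hball
      rw [Metric.mem_ball, Prod.dist_eq]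
      simp only [dist_self, Real.dist_eq]
      exact max_lt (lt_of_lt_of_le hx (min_le_left _ _)) hεpos
    have hdist : |J * (x + y₀) - J * t₀| < min z₀ (1 - z₀) := by
      have h1 : J * (x + y₀) - J * t₀ = J * (x - x₀) := by ring
      rw [h1, abs_mul, abs_of_pos hJ]
      have h2 : |x - x₀| < min z₀ (1 - z₀) / (2 * J) :=
        lt_of_lt_of_le hx (min_le_right _ _)
      calc J * |x - x₀| < J * (min z₀ (1 - z₀) / (2 * J)) := by
            exact mul_lt_mul_of_pos_left h2 hJ
        _ = min z₀ (1 - z₀) / 2 := by field_simp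
        _ < min z₀ (1 - z₀) := by
            have : 0 < min z₀ (1 - z₀) := lt_min hz₀pos (by linarith)
            linarith
    have habs := abs_lt.mp hdist
    have hlb : (n : ℝ) < J * (x + y₀) := by
      have := min_le_left z₀ (1 - z₀); nlinarith [habs.1]
    have hub : J * (x + y₀) < n + 1 := by
      have := min_le_right z₀ (1 - z₀); nlinarith [habs.2]
    have hfloor : ⌊J * (x + y₀)⌋ = n := Int.floor_eq_iff.mpr ⟨hlb.le, hub⟩
    refine ⟨hmem, ?_⟩
    rw [Int.fract, hfloor]
  -- eventual identity
  have hE : ∀ᶠ x in 𝓝 x₀, h₁ x + h₂ y₀ + h₃ (J * (x + y₀) - n) = 0 := by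
    have hball' : ∀ᶠ x in 𝓝 x₀, |x - x₀| < δ := by
      have := Metric.ball_mem_nhds x₀ hδpos
      filter_upwards [this] with x hx
      rwa [Metric.mem_ball, Real.dist_eq] at hx
    filter_upwards [hball'] with x hx
    obtain ⟨hmem, hfr⟩ := hkey x hx
    have := hsum (x, y₀) hmem
    simpa [hfr] using this
  -- derivatives
  have hiz : J * (x₀ + y₀) - n = z₀ := by rw [← ht₀]; linarith [hfl]
  have hinner : HasDerivAt (fun x => J * (x + y₀) - (n : ℝ)) J x₀ := by
    have h := (((hasDerivAt_id x₀).add_const y₀).const_mul J).sub_const (n : ℝ)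
    simpa using h
  have houter : HasDerivAt h₃ (deriv h₃ z₀) z₀ := by
    have : DifferentiableAt ℝ h₃ z₀ :=
      (hd₃ z₀ ⟨hz₀pos.le, hz₀lt⟩).differentiableAt (Ico_mem_nhds hz₀pos hz₀lt)
    exact this.hasDerivAt
  have hcomp : HasDerivAt (fun x => h₃ (J * (x + y₀) - (n : ℝ))) (deriv h₃ z₀ * J) x₀ := by
    have houter' : HasDerivAt h₃ (deriv h₃ z₀) (J * (x₀ + y₀) - (n : ℝ)) := by rwa [hiz]
    exact HasDerivAt.comp x₀ houter' hinner
  have hG : HasDerivAt (fun x => h₁ x + h₂ y₀ + h₃ (J * (x + y₀) - (n : ℝ)))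
      (deriv h₁ x₀ + deriv h₃ z₀ * J) x₀ :=
    (hd₁.hasDerivAt.add_const (h₂ y₀)).add hcomp
  have hG0 : HasDerivAt (fun x => h₁ x + h₂ y₀ + h₃ (J * (x + y₀) - (n : ℝ))) 0 x₀ := by
    refine (hasDerivAt_const x₀ (0 : ℝ)).congr_of_eventuallyEq ?_
    filter_upwards [hE] with x hx
    simpa using hx
  have := hG.unique hG0
  linarith

/-- Pick a nearby interior point where the wrap does not occur. -/
lemma aux_pick (J : ℝ) (hJ : 0 < J) (I : Set (ℝ × ℝ)) (x y : ℝ)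
    (hp : (x, y) ∈ interior I) :
    ∃ y', (x, y') ∈ interior I ∧ Int.fract (J * (x + y')) ≠ 0 := by
  obtain ⟨ε, hεpos, hball⟩ : ∃ ε > 0, Metric.ball (x, y) ε ⊆ interior I := by
    rcases Metric.mem_nhds_iff.mp (isOpen_interior.mem_nhds hp) with ⟨ε, hε, hb⟩
    exact ⟨ε, hε, hb⟩
  by_cases h : Int.fract (J * (x + y)) = 0
  · set d := min (ε / 2) (1 / (2 * J)) with hd
    have hdpos : 0 < d := lt_min (by linarith) (by positivity)
    refine ⟨y + d, ?_, ?_⟩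
    · apply hball
      rw [Metric.mem_ball, Prod.dist_eq]
      simp only [dist_self, Real.dist_eq]
      have : |y + d - y| = d := by rw [show y + d - y = d by ring, abs_of_pos hdpos]
      refine max_lt hεpos ?_
      rw [this]
      exact lt_of_le_of_lt (min_le_left _ _) (by linarith)
    · have hJy : J * (x + y) = (⌊J * (x + y)⌋ : ℝ) := by
        have := Int.floor_add_fract (J * (x + y))
        rw [h] at this; linarith
      have hJd : 0 < J * d := by positivity
      have hJd1 : J * d < 1 := by
        calc J * d ≤ J * (1 / (2 * J)) := by
              exact mul_le_mul_of_nonneg_left (min_le_right _ _) hJ.le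
          _ = 1 / 2 := by field_simp
          _ < 1 := by norm_num
      have : J * (x + (y + d)) = (⌊J * (x + y)⌋ : ℝ) + J * d := by rw [← hJy]; ring
      rw [this, Int.fract_intCast_add, Int.fract_eq_self.mpr ⟨hJd.le, hJd1⟩]
      exact hJd.ne'
  · exact ⟨y, hp, h⟩

theorem identifiability_smooth (J : ℝ) (hJ : 0 < J)
    (I : Set (ℝ × ℝ)) (hI : I ⊆ Set.Icc (0 : ℝ) 1 ×ˢ Set.Icc (0 : ℝ) 1)
    (f₁ f₂ f₃ g₁ g₂ g₃ : ℝ → ℝ)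
    -- bounded away from zero and infinity
    (hbound : ∃ m M : ℝ, 0 < m ∧
      (∀ u ∈ Set.Icc (0 : ℝ) 1, m ≤ f₁ u ∧ f₁ u ≤ M ∧ m ≤ f₂ u ∧ f₂ u ≤ M ∧
        m ≤ g₁ u ∧ g₁ u ≤ M ∧ m ≤ g₂ u ∧ g₂ u ≤ M) ∧
      (∀ u ∈ Set.Ico (0 : ℝ) 1, m ≤ f₃ u ∧ f₃ u ≤ M ∧ m ≤ g₃ u ∧ g₃ u ≤ M))
    -- smoothness
    (hf₁d : DifferentiableOn ℝ f₁ (Set.Icc 0 1))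
    (hf₂d : DifferentiableOn ℝ f₂ (Set.Icc 0 1))
    (hg₁d : DifferentiableOn ℝ g₁ (Set.Icc 0 1))
    (hg₂d : DifferentiableOn ℝ g₂ (Set.Icc 0 1))
    (hf₃d : DifferentiableOn ℝ f₃ (Set.Ico 0 1))
    (hf₃d2 : DifferentiableOn ℝ (derivWithin f₃ (Set.Ico 0 1)) (Set.Ico 0 1))
    (hg₃d : DifferentiableOn ℝ g₃ (Set.Ico 0 1))
    (hg₃d2 : DifferentiableOn ℝ (derivWithin g₃ (Set.Ico 0 1)) (Set.Ico 0 1))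
    -- normalization
    (hf₁n : ∫ u in (0 : ℝ)..1, f₁ u = 1) (hf₂n : ∫ u in (0 : ℝ)..1, f₂ u = 1)
    (hg₁n : ∫ u in (0 : ℝ)..1, g₁ u = 1) (hg₂n : ∫ u in (0 : ℝ)..1, g₂ u = 1)
    -- the two representations agree on I
    (heq : ∀ p ∈ I, f₁ p.1 * f₂ p.2 * f₃ (mJ J (p.1 + p.2)) =
      g₁ p.1 * g₂ p.2 * g₃ (mJ J (p.1 + p.2)))
    -- (A1) projections
    (hA1x : Prod.fst '' I = Set.Icc 0 1) (hA1y : Prod.snd '' I = Set.Icc 0 1)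
    -- (A2)
    (hA2a : ∀ z ∈ Set.Ico (0 : ℝ) 1, ∃ p ∈ interior I, mJ J (p.1 + p.2) = z)
    (hA2b : ∀ x ∈ Set.Ioo (0 : ℝ) 1, ∀ y ∈ Set.Ioo (0 : ℝ) 1,
      ∃ x' y' : ℝ, (x, y') ∈ interior I ∧ (x', y) ∈ interior I)
    -- (A5)
    (hA5 : ∃ (k : ℕ) (x y : ℕ → ℝ), 0 < k ∧ x 0 = 0 ∧ x k = 1 ∧ y 0 = 1 ∧ y k = 0 ∧
      (∀ i < k, x i < x (i + 1)) ∧ (∀ i < k, y (i + 1) < y i) ∧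
      (∀ j < k, ∀ u ∈ Set.Icc (x j) (x (j + 1)), (u, y j) ∈ I)) :
    Set.EqOn f₁ g₁ (Set.Icc 0 1) ∧ Set.EqOn f₂ g₂ (Set.Icc 0 1) ∧
      Set.EqOn f₃ g₃ (Set.Ico 0 1) := by
  obtain ⟨m, M, hm, hb, hb3⟩ := hbound
  -- positivity
  have hf₁p : ∀ u ∈ Set.Icc (0:ℝ) 1, 0 < f₁ u := fun u hu => lt_of_lt_of_le hm (hb u hu).1
  have hf₂p : ∀ u ∈ Set.Icc (0:ℝ) 1, 0 < f₂ u := fun u hu => lt_of_lt_of_le hm (hb u hu).2.2.1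
  have hg₁p : ∀ u ∈ Set.Icc (0:ℝ) 1, 0 < g₁ u := fun u hu => lt_of_lt_of_le hm (hb u hu).2.2.2.2.1
  have hg₂p : ∀ u ∈ Set.Icc (0:ℝ) 1, 0 < g₂ u :=
    fun u hu => lt_of_lt_of_le hm (hb u hu).2.2.2.2.2.2.1
  have hf₃p : ∀ u ∈ Set.Ico (0:ℝ) 1, 0 < f₃ u := fun u hu => lt_of_lt_of_le hm (hb3 u hu).1
  have hg₃p : ∀ u ∈ Set.Ico (0:ℝ) 1, 0 < g₃ u := fun u hu => lt_of_lt_of_le hm (hb3 u hu).2.2.1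
  -- log-ratios
  set h₁ : ℝ → ℝ := fun u => Real.log (f₁ u) - Real.log (g₁ u) with hh₁
  set h₂ : ℝ → ℝ := fun u => Real.log (f₂ u) - Real.log (g₂ u) with hh₂
  set h₃ : ℝ → ℝ := fun u => Real.log (f₃ u) - Real.log (g₃ u) with hh₃
  have hd₁ : DifferentiableOn ℝ h₁ (Set.Icc 0 1) :=
    (hf₁d.log (fun u hu => (hf₁p u hu).ne')).sub (hg₁d.log (fun u hu => (hg₁p u hu).ne'))
  have hd₂ : DifferentiableOn ℝ h₂ (Set.Icc 0 1) :=
    (hf₂d.log (fun u hu => (hf₂p u hu).ne')).sub (hg₂d.log (fun u hu => (hg₂p u hu).ne'))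
  have hd₃ : DifferentiableOn ℝ h₃ (Set.Ico 0 1) :=
    (hf₃d.log (fun u hu => (hf₃p u hu).ne')).sub (hg₃d.log (fun u hu => (hg₃p u hu).ne'))
  -- additive identity on I
  have hsum : ∀ p ∈ I, h₁ p.1 + h₂ p.2 + h₃ (Int.fract (J * (p.1 + p.2))) = 0 := by
    intro p hp
    have hx : p.1 ∈ Set.Icc (0:ℝ) 1 := (hI hp).1
    have hy : p.2 ∈ Set.Icc (0:ℝ) 1 := (hI hp).2
    have hzm : Int.fract (J * (p.1 + p.2)) ∈ Set.Ico (0:ℝ) 1 :=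
      ⟨Int.fract_nonneg _, Int.fract_lt_one _⟩
    have h1 := hf₁p p.1 hx; have h2 := hf₂p p.2 hy; have h3 := hf₃p _ hzm
    have h4 := hg₁p p.1 hx; have h5 := hg₂p p.2 hy; have h6 := hg₃p _ hzm
    have hE := heq p hp
    rw [mJ] at hE
    have hlog := congrArg Real.log hE
    rw [Real.log_mul (by positivity) h3.ne', Real.log_mul h1.ne' h2.ne',
        Real.log_mul (by positivity) h6.ne', Real.log_mul h4.ne' h5.ne'] at hlog
    simp only [hh₁, hh₂, hh₃]
    linarith
  -- interior points are strictly inside the square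
  have hint : interior I ⊆ Set.Ioo (0:ℝ) 1 ×ˢ Set.Ioo (0:ℝ) 1 := by
    have h1 : interior I ⊆ interior (Set.Icc (0:ℝ) 1 ×ˢ Set.Icc (0:ℝ) 1) := interior_mono hI
    rwa [interior_prod_eq, interior_Icc] at h1
  have hd₁at : ∀ x ∈ Set.Ioo (0:ℝ) 1, DifferentiableAt ℝ h₁ x := fun x hx =>
    (hd₁ x ⟨hx.1.le, hx.2.le⟩).differentiableAt (Icc_mem_nhds hx.1 hx.2)
  have hd₂at : ∀ x ∈ Set.Ioo (0:ℝ) 1, DifferentiableAt ℝ h₂ x := fun x hx =>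
    (hd₂ x ⟨hx.1.le, hx.2.le⟩).differentiableAt (Icc_mem_nhds hx.1 hx.2)
  have hd₃at : ∀ z ∈ Set.Ioo (0:ℝ) 1, DifferentiableAt ℝ h₃ z := fun z hz =>
    (hd₃ z ⟨hz.1.le, hz.2⟩).differentiableAt (Ico_mem_nhds hz.1 hz.2)
  -- local constancy of deriv h₃ on (0,1)
  have locconst : ∀ z₀ ∈ Set.Ioo (0:ℝ) 1, ∃ ε > 0, ∀ z, |z - z₀| < ε →
      deriv h₃ z = deriv h₃ z₀ := by
    intro z₀ hz₀
    obtain ⟨p, hpI, hpz⟩ := hA2a z₀ ⟨hz₀.1.le, hz₀.2⟩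
    rw [mJ] at hpz
    have hpIoo := hint hpI
    obtain ⟨ε, hεpos, hball⟩ : ∃ ε > 0, Metric.ball p ε ⊆ interior I := by
      rcases Metric.mem_nhds_iff.mp (isOpen_interior.mem_nhds hpI) with ⟨ε, hε, hb⟩
      exact ⟨ε, hε, hb⟩
    have hd₁p : DifferentiableAt ℝ h₁ p.1 := hd₁at p.1 hpIoo.1
    set ε' := min (J * ε) (min z₀ (1 - z₀)) with hε'
    have hε'pos : 0 < ε' := lt_min (by positivity) (lt_min hz₀.1 (by linarith [hz₀.2]))
    refine ⟨ε', hε'pos, fun z hzd => ?_⟩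
    have hzIoo : z ∈ Set.Ioo (0:ℝ) 1 := by
      have h1 := abs_lt.mp hzd
      have h2 : ε' ≤ min z₀ (1 - z₀) := min_le_right _ _
      have h3 := min_le_left z₀ (1 - z₀); have h4 := min_le_right z₀ (1 - z₀)
      constructor <;> nlinarith
    set y := p.2 + (z - z₀) / J with hy
    have hmem : (p.1, y) ∈ interior I := by
      apply hball
      rw [Metric.mem_ball, Prod.dist_eq]
      simp only [dist_self, Real.dist_eq]
      refine max_lt hεpos ?_
      have : |p.2 + (z - z₀) / J - p.2| = |z - z₀| / J := by
        rw [show p.2 + (z - z₀) / J - p.2 = (z - z₀) / J by ring, abs_div, abs_of_pos hJ]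
      rw [this, div_lt_iff₀ hJ]
      calc |z - z₀| < ε' := hzd
        _ ≤ J * ε := min_le_left _ _
        _ = ε * J := mul_comm _ _
    have hfr : Int.fract (J * (p.1 + y)) = z := by
      have hfl : (⌊J * (p.1 + p.2)⌋ : ℝ) + z₀ = J * (p.1 + p.2) := by
        rw [← hpz]; exact Int.floor_add_fract _
      have : J * (p.1 + y) = (⌊J * (p.1 + p.2)⌋ : ℝ) + z := by
        rw [hy]; field_simp; linarith [hfl]
      rw [this, Int.fract_intCast_add, Int.fract_eq_self.mpr ⟨hzIoo.1.le, hzIoo.2⟩]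
    have hcz : deriv h₁ p.1 = -(J * deriv h₃ z) := by
      have := aux_core J hJ I h₁ h₂ h₃ hd₃ hsum p.1 y hmem hd₁p (by rw [hfr]; exact hzIoo.1.ne')
      rwa [hfr] at this
    have hcz₀ : deriv h₁ p.1 = -(J * deriv h₃ z₀) := by
      have hp' : (p.1, p.2) ∈ interior I := hpI
      have := aux_core J hJ I h₁ h₂ h₃ hd₃ hsum p.1 p.2 hp' hd₁p (by rw [hpz]; exact hz₀.1.ne')
      rwa [hpz] at this
    have : J * deriv h₃ z = J * deriv h₃ z₀ := by linarith
    exact mul_left_cancel₀ hJ.ne' this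
  -- deriv h₃ is globally constant on (0,1)
  set s₀ := deriv h₃ (1/2) with hs₀
  have H3const : ∀ z ∈ Set.Ioo (0:ℝ) 1, deriv h₃ z = s₀ := by
    have hhalf : (1/2 : ℝ) ∈ Set.Ioo (0:ℝ) 1 := by norm_num
    have hsub : Set.Ioo (0:ℝ) 1 ⊆
        interior {w : ℝ | deriv h₃ w = s₀} ∪ interior {w : ℝ | deriv h₃ w ≠ s₀} := by
      intro z hz
      obtain ⟨ε, hεpos, hcd⟩ := locconst z hz
      by_cases h : deriv h₃ z = s₀
      · left
        refine mem_interior.mpr ⟨Metric.ball z ε, ?_, Metric.isOpen_ball,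
          Metric.mem_ball_self hεpos⟩
        intro w hw
        have hw' := hcd w (by rwa [Metric.mem_ball, Real.dist_eq] at hw)
        show deriv h₃ w = s₀
        rw [hw', h]
      · right
        refine mem_interior.mpr ⟨Metric.ball z ε, ?_, Metric.isOpen_ball,
          Metric.mem_ball_self hεpos⟩
        intro w hw
        have hw' := hcd w (by rwa [Metric.mem_ball, Real.dist_eq] at hw)
        show deriv h₃ w ≠ s₀
        rw [hw']
        exact h
    have hdisj : Disjoint (interior {w : ℝ | deriv h₃ w = s₀})
        (interior {w : ℝ | deriv h₃ w ≠ s₀}) := by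
      refine Set.disjoint_iff.mpr fun z hz => ?_
      have h1 : z ∈ {w : ℝ | deriv h₃ w = s₀} := interior_subset hz.1
      have h2 : z ∈ {w : ℝ | deriv h₃ w ≠ s₀} := interior_subset hz.2
      exact h2 h1
    have hnon : (Set.Ioo (0:ℝ) 1 ∩ interior {w : ℝ | deriv h₃ w = s₀}).Nonempty := by
      refine ⟨1/2, hhalf, ?_⟩
      obtain ⟨ε, hεpos, hcd⟩ := locconst (1/2) hhalf
      refine mem_interior.mpr ⟨Metric.ball (1/2) ε, ?_, Metric.isOpen_ball,
        Metric.mem_ball_self hεpos⟩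
      intro w hw
      have hw' := hcd w (by rwa [Metric.mem_ball, Real.dist_eq] at hw)
      show deriv h₃ w = s₀
      rw [hw', hs₀]
    have := (isPreconnected_Ioo (a := (0:ℝ)) (b := 1)).subset_left_of_subset_union
      isOpen_interior isOpen_interior hdisj hsub hnon
    intro z hz
    have hz' : z ∈ {w : ℝ | deriv h₃ w = s₀} := interior_subset (this hz)
    exact hz'
  -- h₃ is affine on [0,1)
  have haff : ∀ z ∈ Set.Ico (0:ℝ) 1, h₃ z = h₃ 0 + s₀ * z := by
    intro z hz
    rcases eq_or_lt_of_le hz.1 with h | h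
    · rw [← h]; ring
    · set φ : ℝ → ℝ := fun w => h₃ w - s₀ * w with hφ
      have hφc : ContinuousOn φ (Set.Icc 0 z) := by
        refine ContinuousOn.sub ?_ (continuous_const.mul continuous_id).continuousOn
        exact (hd₃.continuousOn).mono (Set.Icc_subset_Ico_right hz.2)
      have hφd : ∀ w ∈ Set.Ioo (0:ℝ) z, HasDerivAt φ 0 w := by
        intro w hw
        have hwIoo : w ∈ Set.Ioo (0:ℝ) 1 := ⟨hw.1, lt_of_lt_of_le hw.2 hz.2.le⟩
        have h1 : HasDerivAt h₃ s₀ w := by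
          have := (hd₃at w hwIoo).hasDerivAt
          rwa [H3const w hwIoo] at this
        have h2 : HasDerivAt (fun w => s₀ * w) s₀ w := by
          simpa using (hasDerivAt_id w).const_mul s₀
        have h3 := h1.sub h2
        rw [sub_self] at h3
        exact h3
      have := aux_const_on φ 0 z h hφc hφd z ⟨h.le, le_refl z⟩
      simp only [hφ] at this
      rw [mul_zero, sub_zero] at this
      linarith
  -- the wrap point forces s₀ = 0
  obtain ⟨q, hqI, hq0⟩ := hA2a 0 ⟨le_refl 0, zero_lt_one⟩
  rw [mJ] at hq0
  have hqIoo := hint hqI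
  have hs₀0 : s₀ = 0 := by
    set N : ℤ := ⌊J * (q.1 + q.2)⌋ with hN
    have hJt : J * (q.1 + q.2) = (N : ℝ) := by
      have := Int.floor_add_fract (J * (q.1 + q.2))
      rw [hq0] at this; linarith
    obtain ⟨ε, hεpos, hball⟩ : ∃ ε > 0, Metric.ball q ε ⊆ I := by
      rcases Metric.mem_nhds_iff.mp (mem_interior_iff_mem_nhds.mp hqI) with ⟨ε, hε, hb⟩
      exact ⟨ε, hε, hb⟩
    set δ := min ε (1 / (2 * J)) with hδ
    have hδpos : 0 < δ := lt_min hεpos (by positivity)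
    have hclaim : ∀ x ∈ Set.Ioo (q.1 - δ) q.1,
        h₁ x + h₂ q.2 + (h₃ 0 + s₀ * (J * (x + q.2) - N + 1)) = 0 := by
      intro x hx
      have hmem : (x, q.2) ∈ I := by
        apply hball
        rw [Metric.mem_ball, Prod.dist_eq]
        simp only [dist_self, Real.dist_eq]
        refine max_lt ?_ hεpos
        rw [abs_sub_lt_iff]
        constructor <;>
          linarith [hx.1, hx.2, hεpos, min_le_left ε (1 / (2 * J)),
            min_le_right ε (1 / (2 * J))]
      have hgx : 0 < q.1 - x := by linarith [hx.2]
      have hgd : q.1 - x < 1 / (2 * J) := by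
        have h1 : q.1 - x < δ := by linarith [hx.1]
        linarith [min_le_right ε (1 / (2 * J))]
      have hgap : 0 < J * (q.1 - x) ∧ J * (q.1 - x) < 1 := by
        constructor
        · exact mul_pos hJ hgx
        · have h3 := mul_lt_mul_of_pos_left hgd hJ
          have h2 : J * (1 / (2 * J)) = 1 / 2 := by field_simp
          linarith
      have hr : J * (x + q.2) = (N : ℝ) - J * (q.1 - x) := by rw [← hJt]; ring
      have hfloor : ⌊J * (x + q.2)⌋ = N - 1 := by
        rw [Int.floor_eq_iff]
        push_cast
        constructor <;> [skip; skip] <;> rw [hr] <;> [linarith [hgap.2]; linarith [hgap.1]]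
      have hfr : Int.fract (J * (x + q.2)) = J * (x + q.2) - N + 1 := by
        rw [Int.fract, hfloor]; push_cast; ring
      have hfrmem : Int.fract (J * (x + q.2)) ∈ Set.Ico (0:ℝ) 1 :=
        ⟨Int.fract_nonneg _, Int.fract_lt_one _⟩
      have h1 := hsum (x, q.2) hmem
      have h2 := haff _ hfrmem
      rw [h2] at h1
      rw [hfr] at h1
      simpa using h1
    -- limit as x → q.1 from the left
    have hibot : (𝓝[<] q.1).NeBot := by infer_instance
    set G : ℝ → ℝ := fun x => h₁ x + h₂ q.2 + (h₃ 0 + s₀ * (J * (x + q.2) - N + 1)) with hG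
    have hcG : ContinuousAt G q.1 := by
      have hc1 : ContinuousAt h₁ q.1 := (hd₁at q.1 hqIoo.1).continuousAt
      have hc2 : ContinuousAt (fun x => s₀ * (J * (x + q.2) - N + 1)) q.1 := by fun_prop
      exact (hc1.add continuousAt_const).add (continuousAt_const.add hc2)
    have hT1 : Filter.Tendsto G (𝓝[<] q.1) (𝓝 (G q.1)) :=
      hcG.tendsto.mono_left nhdsWithin_le_nhds
    have hT2 : Filter.Tendsto G (𝓝[<] q.1) (𝓝 0) := by
      refine Filter.Tendsto.congr' ?_ tendsto_const_nhds
      have hm : Set.Ioo (q.1 - δ) q.1 ∈ 𝓝[<] q.1 :=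
        Ioo_mem_nhdsLT (by linarith)
      exact Filter.eventuallyEq_of_mem hm (fun x hx => (hclaim x hx).symm)
    have hGq : G q.1 = 0 := tendsto_nhds_unique hT1 hT2
    have hsq := hsum q (interior_subset hqI)
    rw [hq0] at hsq
    have hGval : G q.1 = h₁ q.1 + h₂ q.2 + h₃ 0 + s₀ := by
      simp only [hG]; rw [hJt]; ring
    rw [hGval] at hGq
    linarith
  -- hence deriv h₃ = 0 and h₃ constant
  have H3zero : ∀ z ∈ Set.Ioo (0:ℝ) 1, deriv h₃ z = 0 := fun z hz => by
    rw [H3const z hz, hs₀0]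
  -- deriv h₁ = 0 on (0,1)
  have H1zero : ∀ x ∈ Set.Ioo (0:ℝ) 1, deriv h₁ x = 0 := by
    intro x hx
    obtain ⟨x', y', hxy', _⟩ := hA2b x hx (1/2) (by norm_num)
    obtain ⟨y'', hy''I, hy''f⟩ := aux_pick J hJ I x y' hxy'
    have hzIoo : Int.fract (J * (x + y'')) ∈ Set.Ioo (0:ℝ) 1 :=
      ⟨lt_of_le_of_ne (Int.fract_nonneg _) (Ne.symm hy''f), Int.fract_lt_one _⟩
    have := aux_core J hJ I h₁ h₂ h₃ hd₃ hsum x y'' hy''I (hd₁at x hx) hy''f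
    rw [this, H3zero _ hzIoo]
    ring
  -- deriv h₂ = 0 on (0,1), by symmetry
  have H2zero : ∀ y ∈ Set.Ioo (0:ℝ) 1, deriv h₂ y = 0 := by
    intro y hy
    obtain ⟨x', y', _, hx'y⟩ := hA2b (1/2) (by norm_num) y hy
    set I' : Set (ℝ × ℝ) := Prod.swap ⁻¹' I with hI'
    have hswap : interior I' = Prod.swap ⁻¹' interior I := by
      rw [hI']
      have h := ((Homeomorph.prodComm ℝ ℝ).preimage_interior I).symm
      have he : (⇑(Homeomorph.prodComm ℝ ℝ) : ℝ × ℝ → ℝ × ℝ) = Prod.swap := rfl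
      rwa [he] at h
    have hsum' : ∀ p ∈ I', h₂ p.1 + h₁ p.2 + h₃ (Int.fract (J * (p.1 + p.2))) = 0 := by
      intro p hp
      have := hsum p.swap hp
      simp only [Prod.fst_swap, Prod.snd_swap] at this
      rw [add_comm p.2 p.1] at this
      linarith
    have hyx' : (y, x') ∈ interior I' := by
      rw [hswap]; simpa using hx'y
    obtain ⟨x'', hx''I, hx''f⟩ := aux_pick J hJ I' y x' hyx'
    have hzIoo : Int.fract (J * (y + x'')) ∈ Set.Ioo (0:ℝ) 1 :=
      ⟨lt_of_le_of_ne (Int.fract_nonneg _) (Ne.symm hx''f), Int.fract_lt_one _⟩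
    have := aux_core J hJ I' h₂ h₁ h₃ hd₃ hsum' y x'' hx''I (hd₂at y hy) hx''f
    rw [this, H3zero _ hzIoo]
    ring
  -- h₁ and h₂ are constant on [0,1]
  have hconst : ∀ (h : ℝ → ℝ), DifferentiableOn ℝ h (Set.Icc 0 1) →
      (∀ x ∈ Set.Ioo (0:ℝ) 1, deriv h x = 0) → ∀ z ∈ Set.Icc (0:ℝ) 1, h z = h 0 := by
    intro h hd hz
    refine aux_const_on h 0 1 zero_lt_one hd.continuousOn (fun z hzI => ?_)
    have hda : DifferentiableAt ℝ h z :=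
      (hd z ⟨hzI.1.le, hzI.2.le⟩).differentiableAt (Icc_mem_nhds hzI.1 hzI.2)
    have := hda.hasDerivAt
    rwa [hz z hzI] at this
  have H1const : ∀ z ∈ Set.Icc (0:ℝ) 1, h₁ z = h₁ 0 := hconst h₁ hd₁ H1zero
  have H2const : ∀ z ∈ Set.Icc (0:ℝ) 1, h₂ z = h₂ 0 := hconst h₂ hd₂ H2zero
  -- normalization kills the constants
  have hkill : ∀ (f g : ℝ → ℝ) (c : ℝ), (∀ u ∈ Set.Icc (0:ℝ) 1, 0 < f u) →
      (∀ u ∈ Set.Icc (0:ℝ) 1, 0 < g u) →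
      (∀ u ∈ Set.Icc (0:ℝ) 1, Real.log (f u) - Real.log (g u) = c) →
      (∫ u in (0:ℝ)..1, f u = 1) → (∫ u in (0:ℝ)..1, g u = 1) →
      Set.EqOn f g (Set.Icc 0 1) := by
    intro f g c hfp hgp hc hfn hgn
    have hfg : ∀ u ∈ Set.Icc (0:ℝ) 1, f u = Real.exp c * g u := by
      intro u hu
      have h1 : Real.log (f u) = c + Real.log (g u) := by linarith [hc u hu]
      calc f u = Real.exp (Real.log (f u)) := (Real.exp_log (hfp u hu)).symm
        _ = Real.exp c * Real.exp (Real.log (g u)) := by rw [h1, Real.exp_add]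
        _ = Real.exp c * g u := by rw [Real.exp_log (hgp u hu)]
    have hint : ∫ u in (0:ℝ)..1, f u = ∫ u in (0:ℝ)..1, Real.exp c * g u := by
      apply intervalIntegral.integral_congr
      intro u hu
      rw [Set.uIcc_of_le (by norm_num : (0:ℝ) ≤ 1)] at hu
      exact hfg u hu
    rw [hfn, intervalIntegral.integral_const_mul, hgn, mul_one] at hint
    have hc0 : c = 0 := by
      have h0 := congrArg Real.log hint
      rw [Real.log_one, Real.log_exp] at h0
      exact h0.symm
    intro u hu
    rw [hfg u hu, hc0, Real.exp_zero, one_mul]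
  have hc₁ : ∀ u ∈ Set.Icc (0:ℝ) 1, Real.log (f₁ u) - Real.log (g₁ u) = h₁ 0 :=
    fun u hu => H1const u hu
  have hc₂ : ∀ u ∈ Set.Icc (0:ℝ) 1, Real.log (f₂ u) - Real.log (g₂ u) = h₂ 0 :=
    fun u hu => H2const u hu
  have hEq₁ : Set.EqOn f₁ g₁ (Set.Icc 0 1) := hkill f₁ g₁ (h₁ 0) hf₁p hg₁p hc₁ hf₁n hg₁n
  have hEq₂ : Set.EqOn f₂ g₂ (Set.Icc 0 1) := hkill f₂ g₂ (h₂ 0) hf₂p hg₂p hc₂ hf₂n hg₂n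
  -- conclude h₁ 0 = h₂ 0 = 0, then h₃ ≡ 0
  have hh₁0 : h₁ 0 = 0 := by
    have := hEq₁ (Set.left_mem_Icc.mpr zero_le_one)
    simp only [hh₁]
    rw [this]; ring
  have hh₂0 : h₂ 0 = 0 := by
    have := hEq₂ (Set.left_mem_Icc.mpr zero_le_one)
    simp only [hh₂]
    rw [this]; ring
  have hq1 : q.1 ∈ Set.Icc (0:ℝ) 1 := ⟨hqIoo.1.1.le, hqIoo.1.2.le⟩
  have hq2 : q.2 ∈ Set.Icc (0:ℝ) 1 := ⟨hqIoo.2.1.le, hqIoo.2.2.le⟩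
  have hsq := hsum q (interior_subset hqI)
  rw [hq0] at hsq
  have hh₃0 : h₃ 0 = 0 := by
    have e1 := H1const q.1 hq1
    have e2 := H2const q.2 hq2
    linarith
  have hEq₃ : Set.EqOn f₃ g₃ (Set.Ico 0 1) := by
    intro u hu
    have h1 : h₃ u = 0 := by rw [haff u hu, hs₀0, hh₃0]; ring
    have h2 : Real.log (f₃ u) = Real.log (g₃ u) := by
      simp only [hh₃] at h1; linarith
    calc f₃ u = Real.exp (Real.log (f₃ u)) := (Real.exp_log (hf₃p u hu)).symm
      _ = Real.exp (Real.log (g₃ u)) := by rw [h2]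
      _ = g₃ u := Real.exp_log (hg₃p u hu)
  exact ⟨hEq₁, hEq₂, hEq₃⟩
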